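/- In any reduced decomposition of a permutation, any two occurrences of consecutive substrings of the form (i+1, i, i+1) (for possibly different values of i) occupy disjoint sets of positions. -/

import Mathlib

/-- The adjacent transposition `s_i` of `S_n` (1-based: swaps positions `i` and `i+1`). -/
def adjT (n : ℕ) (i : ℕ) : Equiv.Perm (Fin n) :=
  if h : 1 ≤ i ∧ i < n then Equiv.swap ⟨i - 1, by omega⟩ ⟨i, h.2⟩ else 1

/-- The number of inversions of a permutation of `Fin n`. -/
def invCount (n : ℕ) (w : Equiv.Perm (Fin n)) : ℕ :=
  (Finset.univ.filter fun p : Fin n × Fin n => p.1 < p.2 ∧ w p.2 < w p.1).card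

/-- `ρ` is a reduced decomposition of `w`: a word of length `inv(w)` in the letters
`1, …, n-1` whose product of adjacent transpositions is `w`. -/
def IsReducedDecomp (n : ℕ) (w : Equiv.Perm (Fin n)) (ρ : List ℕ) : Prop :=
  (∀ r ∈ ρ, 1 ≤ r ∧ r < n) ∧ (ρ.map (adjT n)).prod = w ∧ ρ.length = invCount n w

/-- A short braid move: swapping two adjacent letters differing by at least 2. -/
def ShortBraidMove (ρ ρ' : List ℕ) : Prop :=
  ∃ l r : List ℕ, ∃ a b : ℕ, (a + 2 ≤ b ∨ b + 2 ≤ a) ∧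
    ρ = l ++ [a, b] ++ r ∧ ρ' = l ++ [b, a] ++ r

/-- Two words are in the same commutation class iff related by short braid moves. -/
def CommEquiv : List ℕ → List ℕ → Prop := Relation.ReflTransGen ShortBraidMove

/-- A long braid move: `(i+1, i, i+1) ↔ (i, i+1, i)` on a consecutive substring. -/
def LongBraidMove (ρ ρ' : List ℕ) : Prop :=
  ∃ l r : List ℕ, ∃ i : ℕ,
    (ρ = l ++ [i + 1, i, i + 1] ++ r ∧ ρ' = l ++ [i, i + 1, i] ++ r) ∨
    (ρ = l ++ [i, i + 1, i] ++ r ∧ ρ' = l ++ [i + 1, i, i + 1] ++ r)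

/-- The number of commutation classes of reduced decompositions of `w`. -/
noncomputable def numCommClasses (n : ℕ) (w : Equiv.Perm (Fin n)) : ℕ :=
  Nat.card (Quot fun a b : {ρ : List ℕ // IsReducedDecomp n w ρ} => CommEquiv a.1 b.1)

/-- The arrangement (position ↦ value) after the first `k` steps of the word `ρ`. -/
def prefixPerm (n : ℕ) (ρ : List ℕ) (k : ℕ) : Equiv.Perm (Fin n) :=
  ((ρ.take k).map (adjT n)).prod

/-- The word induced by `ρ` on a set `A` of values: record, in order, each step of `ρ`
swapping two values of `A`, labeled (1-based) by the relative position of the swapped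
pair among the values of `A`. -/
def inducedWord (n : ℕ) (ρ : List ℕ) (A : Finset (Fin n)) : List ℕ :=
  (List.range ρ.length).filterMap fun k =>
    let u := prefixPerm n ρ k
    let i := ρ.getD k 0
    if h : 1 ≤ i ∧ i < n then
      if u ⟨i - 1, by omega⟩ ∈ A ∧ u ⟨i, h.2⟩ ∈ A then
        some ((A.filter fun x => (u.symm x : ℕ) < i - 1).card + 1)
      else none
    else none

/-- The number of `(2,1,2)`-subnetworks of `ρ`. -/
def count212 (n : ℕ) (ρ : List ℕ) : ℕ :=
  (Finset.univ.filter fun A : Finset (Fin n) =>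
    A.card = 3 ∧ inducedWord n ρ A = [2, 1, 2]).card

/-- The number of 321-patterns of `w`. -/
def N321 (n : ℕ) (w : Equiv.Perm (Fin n)) : ℕ :=
  (Finset.univ.filter fun t : Fin n × Fin n × Fin n =>
    t.1 < t.2.1 ∧ t.2.1 < t.2.2 ∧ w t.2.2 < w t.2.1 ∧ w t.2.1 < w t.1).card

lemma swap_order (n i : ℕ) (h1 : 1 ≤ i) (h2 : i < n) (x y : Fin n)
    (hne : ¬((x.val = i - 1 ∧ y.val = i) ∨ (x.val = i ∧ y.val = i - 1)))
    (hlt : Equiv.swap (⟨i-1, by omega⟩ : Fin n) ⟨i, h2⟩ x < Equiv.swap ⟨i-1, by omega⟩ ⟨i, h2⟩ y) :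
    x < y := by
  simp only [Equiv.swap_apply_def, Fin.lt_def, Fin.ext_iff] at hlt ⊢
  push_neg at hne
  split_ifs at hlt <;> (try simp only [Fin.val_mk] at hlt ⊢) <;> omega

lemma invCount_mul_le (n i : ℕ) (u : Equiv.Perm (Fin n)) :
    invCount n (adjT n i * u) ≤ invCount n u + 1 := by
  unfold adjT
  split_ifs with h
  · obtain ⟨h1, h2⟩ := h
    set a : Fin n := ⟨i-1, by omega⟩
    set b : Fin n := ⟨i, h2⟩
    set bad : Fin n × Fin n :=
      if u.symm a < u.symm b then (u.symm a, u.symm b) else (u.symm b, u.symm a)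
    have hsub : (Finset.univ.filter fun p : Fin n × Fin n =>
        p.1 < p.2 ∧ (Equiv.swap a b * u) p.2 < (Equiv.swap a b * u) p.1) ⊆
        insert bad (Finset.univ.filter fun p : Fin n × Fin n => p.1 < p.2 ∧ u p.2 < u p.1) := by
      intro p hp
      rw [Finset.mem_filter] at hp
      simp only [Finset.mem_filter, Finset.mem_univ, true_and, Equiv.Perm.mul_apply] at hp
      obtain ⟨hlt, hinv⟩ := hp
      by_cases hc : ((u p.2).val = i - 1 ∧ (u p.1).val = i) ∨ ((u p.2).val = i ∧ (u p.1).val = i - 1)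
      · -- p = bad
        simp only [Finset.mem_insert]
        left
        have hb : p = bad := by
          rcases hc with ⟨c1, c2⟩ | ⟨c1, c2⟩
          · have e1 : u p.2 = a := by apply Fin.ext; exact c1
            have e2 : u p.1 = b := by apply Fin.ext; exact c2
            have : p.1 = u.symm b := by rw [← e2]; simp
            have : p.2 = u.symm a := by rw [← e1]; simp
            simp only [bad]
            rw [if_neg]
            · ext <;> simp_all
            · intro hcon
              have : p.2 < p.1 := by simp_all
              exact absurd hlt (by omega)
          · have e1 : u p.2 = b := by apply Fin.ext; exact c1
            have e2 : u p.1 = a := by apply Fin.ext; exact c2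
            have : p.1 = u.symm a := by rw [← e2]; simp
            have : p.2 = u.symm b := by rw [← e1]; simp
            simp only [bad]
            rw [if_pos]
            · ext <;> simp_all
            · simp_all
        exact hb
      · simp only [Finset.mem_insert, Finset.mem_filter, Finset.mem_univ, true_and]
        right
        exact ⟨hlt, swap_order n i h1 h2 (u p.2) (u p.1) hc hinv⟩
    calc _ ≤ (insert bad (Finset.univ.filter fun p : Fin n × Fin n => p.1 < p.2 ∧ u p.2 < u p.1)).card :=
          Finset.card_le_card hsub
      _ ≤ _ := Finset.card_insert_le _ _
  · simp [invCount]

lemma invCount_prod_le (n : ℕ) (ρ : List ℕ) :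
    invCount n ((ρ.map (adjT n)).prod) ≤ ρ.length := by
  induction ρ with
  | nil =>
    simp only [List.map_nil, List.prod_nil, List.length_nil, invCount, Nat.le_zero]
    rw [Finset.filter_false_of_mem, Finset.card_empty]
    rintro p - ⟨h1, h2⟩
    simp only [Equiv.Perm.one_apply] at h2
    exact absurd h2 (not_lt.2 h1.le)
  | cons a t ih =>
    simp only [List.map_cons, List.prod_cons, List.length_cons]
    calc invCount n (adjT n a * (t.map (adjT n)).prod) ≤ invCount n ((t.map (adjT n)).prod) + 1 :=
          invCount_mul_le _ _ _
      _ ≤ t.length + 1 := by omega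

lemma swap_triple {α : Type*} [DecidableEq α] (a b c : α)
    (hab : a ≠ b) (hac : a ≠ c) (hbc : b ≠ c) :
    Equiv.swap b c * Equiv.swap a b * Equiv.swap b c * Equiv.swap a b * Equiv.swap b c
      = Equiv.swap a b := by
  ext x
  rcases eq_or_ne x a with rfl | hxa
  · simp [Equiv.Perm.mul_apply, Equiv.swap_apply_def, hab, hac, hbc, hab.symm, hac.symm, hbc.symm]
  rcases eq_or_ne x b with rfl | hxb
  · simp [Equiv.Perm.mul_apply, Equiv.swap_apply_def, hab, hac, hbc, hab.symm, hac.symm, hbc.symm]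
  rcases eq_or_ne x c with rfl | hxc
  · simp [Equiv.Perm.mul_apply, Equiv.swap_apply_def, hab, hac, hbc, hab.symm, hac.symm, hbc.symm]
  · simp [Equiv.Perm.mul_apply, Equiv.swap_apply_def, hxa, hxb, hxc]

lemma adjT_eq (n i : ℕ) (h1 : 1 ≤ i) (h2 : i < n) :
    adjT n i = Equiv.swap ⟨i - 1, by omega⟩ ⟨i, h2⟩ := by
  unfold adjT; rw [dif_pos ⟨h1, h2⟩]

lemma braid5 (n i : ℕ) (h1 : 1 ≤ i) (h2 : i + 1 < n) :
    adjT n (i+1) * adjT n i * adjT n (i+1) * adjT n i * adjT n (i+1) = adjT n i := by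
  have ha : adjT n i = Equiv.swap ⟨i - 1, by omega⟩ ⟨i, by omega⟩ := adjT_eq n i h1 (by omega)
  have hb : adjT n (i+1) = Equiv.swap (⟨i, by omega⟩ : Fin n) ⟨i + 1, h2⟩ := by
    rw [adjT_eq n (i+1) (by omega) h2]
    congr 1
  rw [ha, hb]
  apply swap_triple
  all_goals simp [Fin.ext_iff]
  all_goals omega


lemma get_of_take3 {ρ : List ℕ} {p a b c : ℕ} (hp : (ρ.drop p).take 3 = [a, b, c]) :
    ρ[p]? = some a ∧ ρ[p+1]? = some b ∧ ρ[p+2]? = some c := by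
  have h : ∀ m, m < 3 → ρ[p+m]? = [a, b, c][m]? := by
    intro m hm
    rw [← List.getElem?_drop, ← hp, List.getElem?_take_of_lt hm]
  refine ⟨?_, h 1 (by omega), h 2 (by omega)⟩
  have := h 0 (by omega); simpa using this

lemma key (n : ℕ) (w : Equiv.Perm (Fin n)) (ρ : List ℕ) (h : IsReducedDecomp n w ρ)
    (p q i j : ℕ)
    (hp : (ρ.drop p).take 3 = [i + 1, i, i + 1])
    (hq : (ρ.drop q).take 3 = [j + 1, j, j + 1])
    (hlt : p < q) : p + 3 ≤ q := by
  by_contra hcon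
  obtain ⟨g0, g1, g2⟩ := get_of_take3 hp
  obtain ⟨f0, f1, f2⟩ := get_of_take3 hq
  rcases (by omega : q = p + 1 ∨ q = p + 2) with rfl | rfl
  · -- overlap of 2: ρ[p+1] = i = j+1, ρ[p+2] = i+1 = j
    rw [g1] at f0
    have e2 : ρ[p+1+1]? = some j := f1
    rw [show p+1+1 = p+2 by omega, g2] at e2
    simp at f0 e2
    omega
  · -- overlap of 1: i = j, word contains i+1,i,i+1,i,i+1
    rw [g2] at f0
    simp only [Option.some.injEq] at f0
    have hij : i = j := by omega
    subst hij
    have f1' : ρ[p+3]? = some i := by rw [show p+3 = p+2+1 by omega]; exact f1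
    have f2' : ρ[p+4]? = some (i+1) := by rw [show p+4 = p+2+2 by omega]; exact f2
    have hlen : p + 5 ≤ ρ.length := by
      obtain ⟨hl, -⟩ := List.getElem?_eq_some_iff.1 f2'; omega
    have hi1 : 1 ≤ i ∧ i < n := h.1 i (List.mem_of_getElem? g1)
    have hi2 : i + 1 < n := (h.1 (i+1) (List.mem_of_getElem? g0)).2
    -- decomposition
    have htake5 : (ρ.drop p).take 5 = [i+1, i, i+1, i, i+1] := by
      apply List.ext_getElem?
      intro m
      match m with
      | 0 => rw [List.getElem?_take_of_lt (by omega), List.getElem?_drop]; simpa using g0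
      | 1 => rw [List.getElem?_take_of_lt (by omega), List.getElem?_drop]; simpa using g1
      | 2 => rw [List.getElem?_take_of_lt (by omega), List.getElem?_drop]; simpa using g2
      | 3 => rw [List.getElem?_take_of_lt (by omega), List.getElem?_drop]; simpa using f1'
      | 4 => rw [List.getElem?_take_of_lt (by omega), List.getElem?_drop]; simpa using f2'
      | (m+5) =>
        rw [List.getElem?_eq_none (by simp only [List.length_take, List.length_drop]; omega), List.getElem?_eq_none (by simp)]
    have hdecomp : ρ = ρ.take p ++ [i+1, i, i+1, i, i+1] ++ ρ.drop (p+5) := by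
      conv_lhs => rw [← List.take_append_drop p ρ, ← List.take_append_drop 5 (ρ.drop p)]
      rw [htake5, List.drop_drop]
      simp
    set ρ' : List ℕ := ρ.take p ++ [i] ++ ρ.drop (p+5) with hρ'
    have hprod : (ρ'.map (adjT n)).prod = w := by
      rw [← h.2.1]
      conv_rhs => rw [hdecomp]
      have hb5 : adjT n (i+1) * (adjT n i * (adjT n (i+1) * (adjT n i * adjT n (i+1)))) =
          adjT n i := by
        simpa [mul_assoc] using braid5 n i hi1.1 hi2
      simp only [hρ', List.map_append, List.prod_append, List.map_cons, List.map_nil,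
        List.prod_cons, List.prod_nil, mul_one, hb5]
    have hle := invCount_prod_le n ρ'
    rw [hprod] at hle
    have hlen' : ρ'.length = p + 1 + (ρ.length - (p+5)) := by
      simp [hρ', List.length_take, List.length_drop]
      omega
    have := h.2.2
    omega


/-- Two distinct occurrences of consecutive substrings `(i+1, i, i+1)`
in a reduced decomposition occupy disjoint sets of positions. -/
theorem downward_moves_disjoint
    (n : ℕ) (w : Equiv.Perm (Fin n)) (ρ : List ℕ) (h : IsReducedDecomp n w ρ)
    (p q i j : ℕ)
    (hp : (ρ.drop p).take 3 = [i + 1, i, i + 1])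
    (hq : (ρ.drop q).take 3 = [j + 1, j, j + 1])
    (hpq : p ≠ q) :
    p + 3 ≤ q ∨ q + 3 ≤ p := by
  rcases lt_or_gt_of_ne hpq with hlt | hlt
  · exact Or.inl (key n w ρ h p q i j hp hq hlt)
  · exact Or.inr (key n w ρ h q p j i hq hp hlt)
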